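/- Let S = (P, L) be a generalized quadrangle of order (2,t), let (R, ψ) be a faithful representation of S, and let a, b be two non-collinear points of P. Set A = {r_a r_x : x ∈ P, x ≠ a, x not collinear with a} and B = {r_b r_x : x ∈ P, x ≠ b, x not collinear with b}, viewed as subsets of R. Then |A ∩ B| = t + 2. -/

import Mathlib

open scoped Classical

/-- A slim partial linear space: a nonempty point set, a nonempty collection of
lines each of which is a 3-element set of points, such that any two distinct
points lie in at most one common line. -/
structure SlimPLS (P : Type*) where
  lines : Set (Finset P)
  nonempty_pts : Nonempty P
  nonempty_lines : lines.Nonempty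
  three_points : ∀ l ∈ lines, l.card = 3
  unique_line : ∀ l₁ ∈ lines, ∀ l₂ ∈ lines, ∀ x y : P,
    x ≠ y → x ∈ l₁ → y ∈ l₁ → x ∈ l₂ → y ∈ l₂ → l₁ = l₂

namespace SlimPLS

variable {P : Type*}

/-- Two points are collinear if they are distinct and lie on a common line. -/
def Collinear (S : SlimPLS P) (x y : P) : Prop :=
  x ≠ y ∧ ∃ l ∈ S.lines, x ∈ l ∧ y ∈ l

/-- The collinearity graph of a slim partial linear space. -/
def graph (S : SlimPLS P) : SimpleGraph P where
  Adj x y := S.Collinear x y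
  symm := ⟨fun x y h => ⟨Ne.symm h.1, h.2.elim fun l hl => ⟨l, hl.1, hl.2.2, hl.2.1⟩⟩⟩
  loopless := ⟨fun x h => h.1 rfl⟩

/-- `S` is a generalized quadrangle of order `(2, t)`: it is connected, no point
is collinear with all other points, every point is on exactly `t+1` lines, and
for every point `x` and line `l` with `x ∉ l` there is exactly one point of `l`
collinear with `x`. -/
def IsGQ (S : SlimPLS P) (t : ℕ) : Prop :=
  S.graph.Connected ∧
  (∀ x : P, ∃ y : P, y ≠ x ∧ ¬ S.Collinear x y) ∧
  (∀ x : P, {l | l ∈ S.lines ∧ x ∈ l}.ncard = t + 1) ∧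
  (∀ x : P, ∀ l ∈ S.lines, x ∉ l → ∃! y : P, y ∈ l ∧ S.Collinear x y)

/-- A set of points is an arc if its points are pairwise non-collinear. -/
def IsArc (S : SlimPLS P) (T : Set P) : Prop :=
  ∀ x ∈ T, ∀ y ∈ T, x ≠ y → ¬ S.Collinear x y

/-- `{a,b,c}` is a complete 3-arc: three pairwise distinct, pairwise
non-collinear points not contained in a 4-arc. -/
def Complete3Arc (S : SlimPLS P) (a b c : P) : Prop :=
  a ≠ b ∧ a ≠ c ∧ b ≠ c ∧ S.IsArc {a, b, c} ∧
  ∀ d : P, d ∉ ({a, b, c} : Set P) → ¬ S.IsArc (insert d {a, b, c})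

/-- `{a,b,c}` is a complete 3-arc of the subset `Q`: three pairwise distinct,
pairwise non-collinear points of `Q` not contained in a 4-arc inside `Q`. -/
def Complete3ArcIn (S : SlimPLS P) (Q : Set P) (a b c : P) : Prop :=
  a ∈ Q ∧ b ∈ Q ∧ c ∈ Q ∧ a ≠ b ∧ a ≠ c ∧ b ≠ c ∧ S.IsArc {a, b, c} ∧
  ∀ d ∈ Q, d ∉ ({a, b, c} : Set P) → ¬ S.IsArc (insert d {a, b, c})

/-- `Q` is a sub-generalized-quadrangle of order `(2,t)` of `S`: together with
the lines of `S` contained in it, `Q` is a `(2,t)`-GQ; in particular any line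
meeting `Q` in at least two points is contained in `Q`. -/
def IsSubGQ (S : SlimPLS P) (Q : Set P) (t : ℕ) : Prop :=
  Q.Nonempty ∧
  (∃ l ∈ S.lines, (l : Set P) ⊆ Q) ∧
  (∀ l ∈ S.lines, ∀ x ∈ l, ∀ y ∈ l, x ≠ y → x ∈ Q → y ∈ Q → (l : Set P) ⊆ Q) ∧
  (SimpleGraph.induce Q S.graph).Connected ∧
  (∀ x ∈ Q, ∃ y ∈ Q, y ≠ x ∧ ¬ S.Collinear x y) ∧
  (∀ x ∈ Q, {l | l ∈ S.lines ∧ x ∈ l ∧ (l : Set P) ⊆ Q}.ncard = t + 1) ∧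
  (∀ x ∈ Q, ∀ l ∈ S.lines, (l : Set P) ⊆ Q → x ∉ l → ∃! y : P, y ∈ l ∧ S.Collinear x y)

/-- `S` is a near hexagon: connected of diameter 3, no point collinear with all
other points, and for every point `x` and line `l` there is a unique point of
`l` nearest to `x`. -/
def IsNearHexagon (S : SlimPLS P) : Prop :=
  S.graph.Connected ∧
  (∀ x y : P, S.graph.dist x y ≤ 3) ∧
  (∃ x y : P, S.graph.dist x y = 3) ∧
  (∀ x : P, ∃ y : P, y ≠ x ∧ ¬ S.Collinear x y) ∧
  (∀ x : P, ∀ l ∈ S.lines, ∃! y : P, y ∈ l ∧ ∀ z ∈ l, S.graph.dist x y ≤ S.graph.dist x z)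

/-- `S` is dense: any two points at distance 2 have at least two common
neighbours. -/
def IsDense (S : SlimPLS P) : Prop :=
  ∀ x y : P, S.graph.dist x y = 2 →
    ∃ u v : P, u ≠ v ∧ S.Collinear x u ∧ S.Collinear u y ∧ S.Collinear x v ∧ S.Collinear v y

/-- `Q` is a quad: a convex subset of diameter 2 in which no point is collinear
with all other points of `Q`. -/
def IsQuad (S : SlimPLS P) (Q : Set P) : Prop :=
  (∀ u ∈ Q, ∀ v ∈ Q, ∀ w : P,
      S.graph.dist u w + S.graph.dist w v = S.graph.dist u v → w ∈ Q) ∧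
  (∀ u ∈ Q, ∀ v ∈ Q, S.graph.dist u v ≤ 2) ∧
  (∃ u ∈ Q, ∃ v ∈ Q, S.graph.dist u v = 2) ∧
  (∀ u ∈ Q, ∃ v ∈ Q, v ≠ u ∧ ¬ S.Collinear u v)

/-- A quad `Q` is of type `(2, t₂)` if every point of `Q` lies on exactly
`t₂ + 1` lines contained in `Q`. -/
def QuadType (S : SlimPLS P) (Q : Set P) (t₂ : ℕ) : Prop :=
  ∀ x ∈ Q, {l | l ∈ S.lines ∧ x ∈ l ∧ (l : Set P) ⊆ Q}.ncard = t₂ + 1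

/-- The point-quad pair `(x, Q)` is classical: there is a unique point `y ∈ Q`
nearest to `x`, with `d(x,z) = d(x,y) + d(y,z)` for all `z ∈ Q`. -/
def IsClassicalPair (S : SlimPLS P) (x : P) (Q : Set P) : Prop :=
  ∃! y : P, y ∈ Q ∧ ∀ z ∈ Q, S.graph.dist x z = S.graph.dist x y + S.graph.dist y z

/-- A quad is classical (big) if every point-quad pair with it is classical. -/
def IsClassicalQuad (S : SlimPLS P) (Q : Set P) : Prop :=
  ∀ x : P, S.IsClassicalPair x Q

/-- A subspace: any line containing two of its points is contained in it. -/
def IsSubspace (S : SlimPLS P) (X : Set P) : Prop :=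
  ∀ l ∈ S.lines, ∀ x ∈ l, ∀ y ∈ l, x ≠ y → x ∈ X → y ∈ X → (l : Set P) ⊆ X

/-- The subspace generated by a set of points. -/
def subspaceGen (S : SlimPLS P) (A : Set P) : Set P :=
  ⋂₀ {X | S.IsSubspace X ∧ A ⊆ X}

/-- `NPdim S` is the rank over `F₂` of the distance-3 adjacency matrix. -/
noncomputable def NPdim [Fintype P] (S : SlimPLS P) : ℕ :=
  Matrix.rank (Matrix.of fun x y : P => if S.graph.dist x y = 3 then (1 : ZMod 2) else 0)

/-- `dimV S` is the dimension of the universal representation module of `S`: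
the free `F₂`-vector space on the points modulo the span of the elements
`v_x + v_y + v_z` for the lines `{x,y,z}`. -/
noncomputable def dimV (S : SlimPLS P) : ℕ :=
  Module.finrank (ZMod 2)
    ((P →₀ ZMod 2) ⧸ Submodule.span (ZMod 2)
      {f : P →₀ ZMod 2 | ∃ l ∈ S.lines, f = ∑ x ∈ l, Finsupp.single x 1})

end SlimPLS

/-- A representation of a slim partial linear space `S`: an assignment of an
order-2 element `r x` of `R` to each point `x`, such that the images generate
`R` and for every line `{x,y,z}` the set `{1, r x, r y, r z}` is a Klein four
subgroup (`r x * r y = r z` for the three pairwise distinct points of a line). -/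
structure SlimPLS.Rep {P : Type*} (S : SlimPLS P) (R : Type*) [Group R] where
  r : P → R
  order_two : ∀ x : P, orderOf (r x) = 2
  gen : Subgroup.closure (Set.range r) = ⊤
  line_rel : ∀ l ∈ S.lines, ∀ x ∈ l, ∀ y ∈ l, ∀ z ∈ l,
    x ≠ y → x ≠ z → y ≠ z → r x * r y = r z

/-- A finite 2-group is extraspecial if its Frattini subgroup, commutator
subgroup and center coincide and have order 2. -/
def IsExtraspecial (G : Type*) [Group G] : Prop :=
  Finite G ∧ IsPGroup 2 G ∧ frattini G = commutator G ∧
    commutator G = Subgroup.center G ∧ Nat.card (Subgroup.center G) = 2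

namespace SlimPLS

variable {P : Type*} {S : SlimPLS P}

lemma col_symm {x y : P} (h : S.Collinear x y) : S.Collinear y x :=
  ⟨h.1.symm, h.2.elim fun l hl => ⟨l, hl.1, hl.2.2, hl.2.1⟩⟩

lemma ncol_symm {x y : P} (h : ¬ S.Collinear x y) : ¬ S.Collinear y x :=
  fun h' => h (col_symm h')

lemma col_of_mem {l : Finset P} (hl : l ∈ S.lines) {x y : P} (hx : x ∈ l) (hy : y ∈ l)
    (hxy : x ≠ y) : S.Collinear x y := ⟨hxy, l, hl, hx, hy⟩

lemma exists_third {l : Finset P} (hl : l ∈ S.lines) {x y : P} (hx : x ∈ l) (hy : y ∈ l)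
    (hxy : x ≠ y) : ∃ z, z ∈ l ∧ z ≠ x ∧ z ≠ y ∧ ∀ w ∈ l, w = x ∨ w = y ∨ w = z := by
  obtain ⟨u, v, w, huv, huw, hvw, rfl⟩ := Finset.card_eq_three.mp (S.three_points l hl)
  simp only [Finset.mem_insert, Finset.mem_singleton] at hx hy
  have tri : ∀ z : P, z ∈ ({u, v, w} : Finset P) → z = u ∨ z = v ∨ z = w := fun z hz => by
    simpa using hz
  rcases hx with rfl | rfl | rfl <;> rcases hy with rfl | rfl | rfl
  · exact absurd rfl hxy
  · exact ⟨w, by simp, by tauto, by tauto, fun t ht => by rcases tri t ht with h|h|h <;> tauto⟩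
  · exact ⟨v, by simp, by tauto, by tauto, fun t ht => by rcases tri t ht with h|h|h <;> tauto⟩
  · exact ⟨w, by simp, by tauto, by tauto, fun t ht => by rcases tri t ht with h|h|h <;> tauto⟩
  · exact absurd rfl hxy
  · exact ⟨u, by simp, by tauto, by tauto, fun t ht => by rcases tri t ht with h|h|h <;> tauto⟩
  · exact ⟨v, by simp, by tauto, by tauto, fun t ht => by rcases tri t ht with h|h|h <;> tauto⟩
  · exact ⟨u, by simp, by tauto, by tauto, fun t ht => by rcases tri t ht with h|h|h <;> tauto⟩
  · exact absurd rfl hxy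

private lemma star_aux {x y : P} (h : S.Collinear x y) :
    ∃ z, ∃ l ∈ S.lines, x ∈ l ∧ y ∈ l ∧ z ∈ l ∧ z ≠ x ∧ z ≠ y ∧
      ∀ w ∈ l, w = x ∨ w = y ∨ w = z := by
  obtain ⟨hxy, l, hl, hx, hy⟩ := h
  obtain ⟨z, hz, h1, h2, h3⟩ := exists_third hl hx hy hxy
  exact ⟨z, l, hl, hx, hy, hz, h1, h2, h3⟩

/-- The third point on the line through two collinear points (junk value otherwise). -/
noncomputable def star3 (S : SlimPLS P) (x y : P) : P :=
  if h : S.Collinear x y then Classical.choose (star_aux h) else x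

lemma star3_spec {x y : P} (h : S.Collinear x y) :
    ∃ l ∈ S.lines, x ∈ l ∧ y ∈ l ∧ S.star3 x y ∈ l ∧ S.star3 x y ≠ x ∧ S.star3 x y ≠ y ∧
      ∀ w ∈ l, w = x ∨ w = y ∨ w = S.star3 x y := by
  rw [star3, dif_pos h]
  exact Classical.choose_spec (star_aux h)

lemma star3_ne_left {x y : P} (h : S.Collinear x y) : S.star3 x y ≠ x :=
  (star3_spec h).elim fun _ hl => hl.2.2.2.2.1

lemma star3_ne_right {x y : P} (h : S.Collinear x y) : S.star3 x y ≠ y :=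
  (star3_spec h).elim fun _ hl => hl.2.2.2.2.2.1

lemma col_star_left {x y : P} (h : S.Collinear x y) : S.Collinear x (S.star3 x y) := by
  obtain ⟨l, hl, hx, _, hs, hs1, _, _⟩ := star3_spec h
  exact col_of_mem hl hx hs (Ne.symm hs1)

lemma col_star_right {x y : P} (h : S.Collinear x y) : S.Collinear y (S.star3 x y) := by
  obtain ⟨l, hl, _, hy, hs, _, hs2, _⟩ := star3_spec h
  exact col_of_mem hl hy hs (Ne.symm hs2)



variable {P : Type*} {S : SlimPLS P} {t : ℕ}

lemma not_mem_line {x y w : P} (h : S.Collinear x y) (hw1 : w ≠ x) (hw2 : w ≠ y)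
    (hw3 : w ≠ S.star3 x y) {l : Finset P} (hl : l ∈ S.lines) (hx : x ∈ l) (hy : y ∈ l) :
    w ∉ l := by
  obtain ⟨l', hl', hx', hy', _, _, _, htri⟩ := star3_spec h
  have : l = l' := S.unique_line l hl l' hl' x y h.1 hx hy hx' hy'
  subst this
  intro hw
  rcases htri w hw with rfl | rfl | rfl <;> simp_all

/-- P2: a point collinear with two points of a line is the third point. -/
lemma col_two (hGQ : S.IsGQ t) {x y w : P} (h : S.Collinear x y)
    (hwx : S.Collinear w x) (hwy : S.Collinear w y) : w = S.star3 x y := by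
  by_contra hw3
  obtain ⟨l, hl, hx, hy, _, _, _, _⟩ := star3_spec h
  have hwl : w ∉ l := not_mem_line h hwx.1 hwy.1 hw3 hl hx hy
  obtain ⟨z, _, huniq⟩ := hGQ.2.2.2 w l hl hwl
  have h1 := huniq x ⟨hx, hwx⟩
  have h2 := huniq y ⟨hy, hwy⟩
  exact h.1 (h1.trans h2.symm)

/-- P3: a point off a line non-collinear with two of its points is collinear with the third. -/
lemma col_forced (hGQ : S.IsGQ t) {x y w : P} (h : S.Collinear x y)
    (hwx : ¬ S.Collinear w x) (hwy : ¬ S.Collinear w y)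
    (hw1 : w ≠ x) (hw2 : w ≠ y) (hw3 : w ≠ S.star3 x y) :
    S.Collinear w (S.star3 x y) := by
  obtain ⟨l, hl, hx, hy, hs, _, _, htri⟩ := star3_spec h
  have hwl : w ∉ l := not_mem_line h hw1 hw2 hw3 hl hx hy
  obtain ⟨z, ⟨hzl, hzc⟩, _⟩ := hGQ.2.2.2 w l hl hwl
  rcases htri z hzl with rfl | rfl | rfl
  · exact absurd hzc hwx
  · exact absurd hzc hwy
  · exact hzc

/-- P4: a point off a line collinear with one of its points is non-collinear with the others. -/
lemma col_unique_side (hGQ : S.IsGQ t) {x y w : P} (h : S.Collinear x y)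
    (hwx : S.Collinear w x) (hw2 : w ≠ y) (hw3 : w ≠ S.star3 x y) :
    ¬ S.Collinear w y ∧ ¬ S.Collinear w (S.star3 x y) := by
  obtain ⟨l, hl, hx, hy, hs, hs1, hs2, _⟩ := star3_spec h
  have hwl : w ∉ l := not_mem_line h hwx.1 hw2 hw3 hl hx hy
  obtain ⟨z, _, huniq⟩ := hGQ.2.2.2 w l hl hwl
  have h1 := huniq x ⟨hx, hwx⟩
  constructor
  · intro hc
    exact h.1 (((huniq y ⟨hy, hc⟩).trans h1.symm).symm)
  · intro hc
    exact hs1 ((huniq _ ⟨hs, hc⟩).trans h1.symm)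

lemma star3_comm {x y : P} (h : S.Collinear x y) : S.star3 x y = S.star3 y x := by
  obtain ⟨l, hl, hx, hy, hs, hs1, hs2, htri⟩ := star3_spec h
  obtain ⟨l', hl', hy', hx', hs', hs1', hs2', _⟩ := star3_spec (col_symm h)
  have : l' = l := S.unique_line l' hl' l hl x y h.1 hx' hy' hx hy
  subst this
  rcases htri _ hs' with h' | h' | h'
  · exact absurd h' hs2'
  · exact absurd h' hs1'
  · exact h'.symm

lemma star3_star3 {x y : P} (h : S.Collinear x y) : S.star3 x (S.star3 x y) = y := by
  have h' : S.Collinear x (S.star3 x y) := col_star_left h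
  obtain ⟨l, hl, hx, hy, hs, hs1, hs2, htri⟩ := star3_spec h
  obtain ⟨l', hl', hx', hz', hs', hs1', hs2', _⟩ := star3_spec h'
  have : l' = l := S.unique_line l' hl' l hl x (S.star3 x y) h'.1 hx' hz' hx hs
  subst this
  rcases htri _ hs' with h'' | h'' | h''
  · exact absurd h'' hs1'
  · exact h''
  · exact absurd h'' hs2'



variable {P : Type*} {S : SlimPLS P} {t : ℕ}

lemma lines_through_finite (hGQ : S.IsGQ t) (x : P) :
    {l | l ∈ S.lines ∧ x ∈ l}.Finite := by
  by_contra h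
  have := Set.Infinite.ncard h
  rw [hGQ.2.2.1 x] at this
  omega

lemma exists_line_through (hGQ : S.IsGQ t) (x : P) : ∃ l ∈ S.lines, x ∈ l := by
  have h := hGQ.2.2.1 x
  have : {l | l ∈ S.lines ∧ x ∈ l}.Nonempty := by
    apply Set.nonempty_of_ncard_ne_zero; rw [h]; omega
  obtain ⟨l, hl⟩ := this
  exact ⟨l, hl.1, hl.2⟩

lemma t_pos (hGQ : S.IsGQ t) : 1 ≤ t := by
  by_contra ht
  have ht0 : t = 0 := by omega
  -- find a point on two distinct lines
  obtain ⟨x⟩ := S.nonempty_pts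
  obtain ⟨b, hbx, hbc⟩ := hGQ.2.1 x
  obtain ⟨l, hl, hbl⟩ := exists_line_through hGQ b
  have hxl : x ∉ l := fun hxl => hbc (col_of_mem hl hxl hbl hbx.symm)
  obtain ⟨c, ⟨hcl, hcx⟩, _⟩ := hGQ.2.2.2 x l hl hxl
  obtain ⟨hcx', l', hl', hcl', hxl'⟩ := col_symm hcx
  have hne : l ≠ l' := fun h => hxl (h ▸ hxl')
  have h1 := hGQ.2.2.1 c
  rw [ht0] at h1
  obtain ⟨m, hm⟩ := Set.ncard_eq_one.mp h1
  have e1 : l = m := by have : l ∈ {l_1 | l_1 ∈ S.lines ∧ c ∈ l_1} := ⟨hl, hcl⟩; rwa [hm] at this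
  have e2 : l' = m := by have : l' ∈ {l_1 | l_1 ∈ S.lines ∧ c ∈ l_1} := ⟨hl', hcl'⟩; rwa [hm] at this
  exact hne (e1.trans e2.symm)

/-- Two distinct common neighbours of a non-collinear pair of points. -/
lemma two_centers (hGQ : S.IsGQ t) {a b : P} (hne : a ≠ b) (hab : ¬ S.Collinear a b) :
    ∃ c₁ c₂, c₁ ≠ c₂ ∧ S.Collinear a c₁ ∧ S.Collinear b c₁ ∧ S.Collinear a c₂ ∧
      S.Collinear b c₂ ∧ ¬ S.Collinear c₁ c₂ := by
  have hcard : (1 : ℕ) < {l | l ∈ S.lines ∧ b ∈ l}.ncard := by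
    rw [hGQ.2.2.1 b]; have := t_pos hGQ; omega
  obtain ⟨l₁, hl₁, l₂, hl₂, hll⟩ :=
    (Set.one_lt_ncard (lines_through_finite hGQ b)).mp hcard
  have key : ∀ l ∈ S.lines, b ∈ l → ∃ c, S.Collinear a c ∧ S.Collinear b c ∧ c ∈ l := by
    intro l hl hbl
    have hal : a ∉ l := fun hal => hab (col_of_mem hl hal hbl hne)
    obtain ⟨c, ⟨hcl, hca⟩, _⟩ := hGQ.2.2.2 a l hl hal
    have hcb : c ≠ b := fun h => hab (h ▸ hca)
    exact ⟨c, hca, col_of_mem hl hbl hcl hcb.symm, hcl⟩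
  obtain ⟨c₁, hc₁a, hc₁b, hc₁l⟩ := key l₁ hl₁.1 hl₁.2
  obtain ⟨c₂, hc₂a, hc₂b, hc₂l⟩ := key l₂ hl₂.1 hl₂.2
  have hcc : c₁ ≠ c₂ := by
    rintro rfl
    exact hll (S.unique_line l₁ hl₁.1 l₂ hl₂.1 b c₁ hc₁b.1 hl₁.2 hc₁l hl₂.2 hc₂l)
  refine ⟨c₁, c₂, hcc, hc₁a, hc₁b, hc₂a, hc₂b, fun hcol => ?_⟩
  have e1 : a = S.star3 c₁ c₂ := col_two hGQ hcol hc₁a hc₂a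
  have e2 : b = S.star3 c₁ c₂ := col_two hGQ hcol hc₁b hc₂b
  exact hne (e1.trans e2.symm)

end SlimPLS

namespace SlimPLS

variable {P : Type*} {S : SlimPLS P} {t : ℕ} {R : Type*} [Group R]

lemma ne_of_ncol_of_col {w u v : P} (h1 : ¬ S.Collinear w u) (h2 : S.Collinear v u) :
    w ≠ v := fun e => h1 (by rw [e]; exact h2)

lemma ne_of_col_of_ncol {w u v : P} (h1 : S.Collinear u w) (h2 : ¬ S.Collinear u v) :
    w ≠ v := fun e => h2 (by rw [← e]; exact h1)

lemma ne_star_of_ncol_right {x y w : P} (hxy : S.Collinear x y) (hw : ¬ S.Collinear w y) :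
    w ≠ S.star3 x y := fun e => hw (col_symm (by rw [e]; exact col_star_right hxy))

lemma ne_star_of_ncol_left {x y w : P} (hxy : S.Collinear x y) (hw : ¬ S.Collinear w x) :
    w ≠ S.star3 x y := fun e => hw (col_symm (by rw [e]; exact col_star_left hxy))

lemma Rep.invo (ρ : S.Rep R) (x : P) : ρ.r x * ρ.r x = 1 := by
  have h := pow_orderOf_eq_one (ρ.r x)
  rwa [ρ.order_two x, pow_two] at h

lemma Rep.ne_one (ρ : S.Rep R) (x : P) : ρ.r x ≠ 1 := by
  intro h
  have := ρ.order_two x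
  rw [h, orderOf_one] at this
  omega

lemma Rep.mul_eq (ρ : S.Rep R) {x y : P} (h : S.Collinear x y) :
    ρ.r x * ρ.r y = ρ.r (S.star3 x y) := by
  obtain ⟨l, hl, hx, hy, hs, hs1, hs2, _⟩ := star3_spec h
  exact ρ.line_rel l hl x hx y hy _ hs h.1 (Ne.symm hs1) (Ne.symm hs2)

lemma Rep.commute_col (ρ : S.Rep R) {x y : P} (h : S.Collinear x y) :
    Commute (ρ.r x) (ρ.r y) := by
  have h1 := ρ.mul_eq h
  have h2 := ρ.mul_eq (col_symm h)
  rw [← star3_comm h] at h2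
  exact h1.trans h2.symm

/-- The key grid lemma: images of non-collinear points commute. -/
lemma Rep.commute_noncol (hGQ : S.IsGQ t) (ρ : S.Rep R) {p q : P} (hne : p ≠ q)
    (hpq : ¬ S.Collinear p q) : Commute (ρ.r p) (ρ.r q) := by
  have hqp : ¬ S.Collinear q p := ncol_symm hpq
  obtain ⟨c₁, c₂, hcc, hpc₁, hqc₁, hpc₂, hqc₂, hc₁c₂⟩ := two_centers hGQ hne hpq
  have hc₂c₁ : ¬ S.Collinear c₂ c₁ := ncol_symm hc₁c₂
  -- (i) q vs x₃ = star3 p c₁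
  have hi : ¬ S.Collinear q (S.star3 p c₁) := by
    have h1 := col_unique_side hGQ (col_symm hpc₁) hqc₁ hne.symm
      (ne_star_of_ncol_right (col_symm hpc₁) hqp)
    rw [star3_comm hpc₁]; exact h1.2
  have hi' : q ≠ S.star3 p c₁ :=
    ne_of_ncol_of_col hqp (col_symm (col_star_left hpc₁))
  -- (ii) c₂ vs x₃
  have hii : ¬ S.Collinear c₂ (S.star3 p c₁) :=
    (col_unique_side hGQ hpc₁ (col_symm hpc₂) hcc.symm
      (ne_of_ncol_of_col hc₂c₁ (col_symm (col_star_right hpc₁)))).2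
  have hii' : c₂ ≠ S.star3 p c₁ :=
    ne_of_ncol_of_col hc₂c₁ (col_symm (col_star_right hpc₁))
  -- (iii) Col x₃ y₃
  have hiii : S.Collinear (S.star3 p c₁) (S.star3 q c₂) :=
    col_forced hGQ hqc₂ (ncol_symm hi) (ncol_symm hii) hi'.symm hii'.symm
      (ne_of_ncol_of_col (ncol_symm hi) (col_symm (col_star_left hqc₂)))
  -- (iv) p vs z₁ = star3 q c₁
  have hiv : ¬ S.Collinear p (S.star3 q c₁) := by
    have h1 := col_unique_side hGQ (col_symm hqc₁) hpc₁ hne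
      (ne_star_of_ncol_right (col_symm hqc₁) hpq)
    rw [star3_comm hqc₁]; exact h1.2
  have hiv' : p ≠ S.star3 q c₁ :=
    ne_of_ncol_of_col hpq (col_symm (col_star_left hqc₁))
  -- (v) c₂ vs z₁
  have hv : ¬ S.Collinear c₂ (S.star3 q c₁) :=
    (col_unique_side hGQ hqc₁ (col_symm hqc₂) hcc.symm
      (ne_of_ncol_of_col hc₂c₁ (col_symm (col_star_right hqc₁)))).2
  -- (vi) Col z₁ z₂
  have hz₁c₂ : (S.star3 q c₁) ≠ c₂ :=
    ne_of_col_of_ncol (col_star_right hqc₁) hc₁c₂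
  have hvi : S.Collinear (S.star3 q c₁) (S.star3 p c₂) :=
    col_forced hGQ hpc₂ (ncol_symm hiv) (ncol_symm hv) hiv'.symm hz₁c₂
      (ne_of_ncol_of_col (ncol_symm hiv) (col_symm (col_star_left hpc₂)))
  -- (vii) ¬Col z₁ x₃
  have hvii : ¬ S.Collinear (S.star3 q c₁) (S.star3 p c₁) := by
    intro hcol
    have e := col_two hGQ (col_symm (col_star_right hpc₁)) hcol
      (col_symm (col_star_right hqc₁))
    have e2 : S.star3 (S.star3 p c₁) c₁ = p := by
      rw [star3_comm (col_symm (col_star_right hpc₁) : S.Collinear (S.star3 p c₁) c₁),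
        star3_comm hpc₁, star3_star3 (col_symm hpc₁)]
    rw [e2] at e
    exact hiv' e.symm
  -- (viii) ¬Col z₁ y₃
  have hviii : ¬ S.Collinear (S.star3 q c₁) (S.star3 q c₂) :=
    (col_unique_side hGQ hqc₂ (col_symm (col_star_left hqc₁)) hz₁c₂
      (ne_of_ncol_of_col (ncol_symm hv) (col_symm (col_star_right hqc₂)))).2
  -- (ix) Col z₁ z₃
  have hix : S.Collinear (S.star3 q c₁) (S.star3 (S.star3 p c₁) (S.star3 q c₂)) :=
    col_forced hGQ hiii hvii hviii
      (ne_of_col_of_ncol (col_star_left hqc₁) hi)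
      (ne_of_ncol_of_col (ncol_symm hv) (col_symm (col_star_right hqc₂)))
      (ne_of_ncol_of_col hvii (col_symm (col_star_left hiii)))
  -- (x) ¬Col z₂ x₃
  have hx : ¬ S.Collinear (S.star3 p c₂) (S.star3 p c₁) :=
    (col_unique_side hGQ hpc₁ (col_symm (col_star_left hpc₂))
      (ne_of_col_of_ncol (col_star_right hpc₂) hc₂c₁)
      (ne_of_col_of_ncol (col_star_right hpc₂) hii)).2
  -- (xi') ¬Col p y₃
  have hxi' : ¬ S.Collinear p (S.star3 q c₂) := by
    have h1 := col_unique_side hGQ (col_symm hqc₂) hpc₂ hne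
      (ne_star_of_ncol_right (col_symm hqc₂) hpq)
    rw [star3_comm hqc₂]; exact h1.2
  -- (xi) ¬Col z₂ y₃
  have hxi : ¬ S.Collinear (S.star3 p c₂) (S.star3 q c₂) := by
    have h1 := col_unique_side hGQ (col_symm hqc₂) (col_symm (col_star_right hpc₂))
      (ne_of_col_of_ncol (col_star_left hpc₂) hpq)
      (by rw [← star3_comm hqc₂]
          exact ne_of_col_of_ncol (col_star_left hpc₂) hxi')
    rw [star3_comm hqc₂]; exact h1.2
  -- (xii) Col z₂ z₃
  have hxii : S.Collinear (S.star3 p c₂) (S.star3 (S.star3 p c₁) (S.star3 q c₂)) :=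
    col_forced hGQ hiii hx hxi
      (ne_of_col_of_ncol (col_star_right hpc₂) hii)
      (ne_of_col_of_ncol (col_star_left hpc₂) hxi')
      (ne_of_ncol_of_col hx (col_symm (col_star_left hiii)))
  -- (xiii)
  have hxiii : S.star3 (S.star3 p c₁) (S.star3 q c₂) = S.star3 (S.star3 q c₁) (S.star3 p c₂) :=
    col_two hGQ hvi (col_symm hix) (col_symm hxii)
  -- (xiv) algebra
  have e5 := ρ.mul_eq hiii
  have e6 := ρ.mul_eq hvi
  rw [← hxiii] at e6
  have key : (ρ.r p * ρ.r c₁) * (ρ.r q * ρ.r c₂) = (ρ.r q * ρ.r c₁) * (ρ.r p * ρ.r c₂) := by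
    rw [ρ.mul_eq hpc₁, ρ.mul_eq hqc₂, ρ.mul_eq hqc₁, ρ.mul_eq hpc₂, e5, e6]
  have cq : ρ.r c₁ * ρ.r q = ρ.r q * ρ.r c₁ := (ρ.commute_col hqc₁).symm.eq
  have cp : ρ.r c₁ * ρ.r p = ρ.r p * ρ.r c₁ := (ρ.commute_col hpc₁).symm.eq
  have key2 : (ρ.r p * ρ.r q) * (ρ.r c₁ * ρ.r c₂) = (ρ.r q * ρ.r p) * (ρ.r c₁ * ρ.r c₂) := by
    calc (ρ.r p * ρ.r q) * (ρ.r c₁ * ρ.r c₂)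
        = ρ.r p * (ρ.r q * ρ.r c₁) * ρ.r c₂ := by group
      _ = ρ.r p * (ρ.r c₁ * ρ.r q) * ρ.r c₂ := by rw [cq]
      _ = (ρ.r p * ρ.r c₁) * (ρ.r q * ρ.r c₂) := by group
      _ = (ρ.r q * ρ.r c₁) * (ρ.r p * ρ.r c₂) := key
      _ = ρ.r q * (ρ.r c₁ * ρ.r p) * ρ.r c₂ := by group
      _ = ρ.r q * (ρ.r p * ρ.r c₁) * ρ.r c₂ := by rw [cp]
      _ = (ρ.r q * ρ.r p) * (ρ.r c₁ * ρ.r c₂) := by group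
  exact mul_right_cancel key2

/-- All generator images commute. -/
lemma Rep.commute_all (hGQ : S.IsGQ t) (ρ : S.Rep R) (x y : P) :
    Commute (ρ.r x) (ρ.r y) := by
  rcases eq_or_ne x y with rfl | hne
  · exact Commute.refl _
  · by_cases h : S.Collinear x y
    · exact ρ.commute_col h
    · exact ρ.commute_noncol hGQ hne h

end SlimPLS

namespace SlimPLS

variable {P : Type*} {S : SlimPLS P} {t : ℕ} {R : Type*} [Group R]

lemma Rep.mul_comm_all (hGQ : S.IsGQ t) (ρ : S.Rep R) (g h : R) : g * h = h * g := by
  have hg : g ∈ Subgroup.closure (Set.range ρ.r) := by rw [ρ.gen]; trivial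
  have hh : h ∈ Subgroup.closure (Set.range ρ.r) := by rw [ρ.gen]; trivial
  induction hg, hh using Subgroup.closure_induction₂ with
  | mem x y hx hy =>
    obtain ⟨u, rfl⟩ := hx
    obtain ⟨v, rfl⟩ := hy
    exact (ρ.commute_all hGQ u v).eq
  | one_left => simp
  | one_right => simp
  | mul_left x y z hx hy hz h1 h2 => exact (Commute.mul_left h1 h2).eq
  | mul_right x y z hx hy hz h1 h2 => exact (Commute.mul_right h1 h2).eq
  | inv_left x y hx hy h1 => exact (Commute.inv_left h1).eq
  | inv_right x y hx hy h1 => exact (Commute.inv_right h1).eq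

lemma Rep.eq_of_mul_eq_one (ρ : S.Rep R) {u v : P} (hf : Function.Injective ρ.r)
    (h : ρ.r u * ρ.r v = 1) : u = v := by
  apply hf
  calc ρ.r u = ρ.r u * (ρ.r v * ρ.r v) := by rw [ρ.invo, mul_one]
    _ = (ρ.r u * ρ.r v) * ρ.r v := by rw [mul_assoc]
    _ = ρ.r v := by rw [h, one_mul]

lemma Rep.decompose (ρ : S.Rep R) {a c : P} (h : S.Collinear a c) :
    ρ.r a = ρ.r (S.star3 a c) * ρ.r c := by
  rw [← ρ.mul_eq h, mul_assoc, ρ.invo, mul_one]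

/-- Case A of the quadrangle relation elimination. -/
lemma Rep.caseA (hGQ : S.IsGQ t) (ρ : S.Rep R) (hf : Function.Injective ρ.r)
    {a b x y c : P}
    (hab : a ≠ b) (hnab : ¬ S.Collinear a b)
    (hax : a ≠ x) (hnax : ¬ S.Collinear a x)
    (hbx : b ≠ x) (hnbx : ¬ S.Collinear b x)
    (hxy : x ≠ y) (hnxy : ¬ S.Collinear x y)
    (hca : S.Collinear a c) (hcb : S.Collinear b c) (hcx : ¬ S.Collinear c x)
    (rel : ρ.r a * ρ.r b * ρ.r x * ρ.r y = 1) : False := by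
  letI : CommGroup R := { (inferInstance : Group R) with mul_comm := ρ.mul_comm_all hGQ }
  have hxc : x ≠ c := ne_of_ncol_of_col (ncol_symm hnax) (col_symm hca)
  have hF1 : S.Collinear x (S.star3 a c) :=
    col_forced hGQ hca (ncol_symm hnax) (ncol_symm hcx) hax.symm hxc
      (ne_star_of_ncol_left hca (ncol_symm hnax))
  have hF2 : S.Collinear x (S.star3 b c) :=
    col_forced hGQ hcb (ncol_symm hnbx) (ncol_symm hcx) hbx.symm hxc
      (ne_star_of_ncol_left hcb (ncol_symm hnbx))
  have hF3ne : S.star3 a c ≠ S.star3 b c := by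
    intro e
    have e1 : a = S.star3 c (S.star3 a c) := by
      rw [star3_comm hca, star3_star3 (col_symm hca)]
    have e2 : S.star3 c (S.star3 b c) = b := by
      rw [star3_comm hcb, star3_star3 (col_symm hcb)]
    exact hab (by rw [e1, e, e2])
  have hF3 : ¬ S.Collinear (S.star3 a c) (S.star3 b c) := by
    intro hcol
    have e := col_two hGQ (col_star_right hca) (col_symm (col_star_right hcb))
      (col_symm hcol)
    have e2 : S.star3 c (S.star3 a c) = a := by
      rw [star3_comm hca, star3_star3 (col_symm hca)]
    rw [e2] at e
    exact hnab (col_symm (e ▸ col_star_left hcb))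
  have hacx : S.Collinear (S.star3 a c) x := col_symm hF1
  have hF5ne : S.star3 b c ≠ S.star3 (S.star3 a c) x :=
    ne_of_ncol_of_col (ncol_symm hF3) (col_symm (col_star_left hacx))
  have hF5 : ¬ S.Collinear (S.star3 b c) (S.star3 (S.star3 a c) x) := by
    have h1 := col_unique_side hGQ hF1 (col_symm hF2) hF3ne.symm
      (by rw [← star3_comm hacx]; exact hF5ne)
    rw [star3_comm hacx]; exact h1.2
  -- algebra
  have rel3 : ρ.r (S.star3 a c) * ρ.r (S.star3 b c) * ρ.r x * ρ.r y = 1 := by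
    rw [ρ.decompose hca, ρ.decompose hcb] at rel
    have h2 : (ρ.r (S.star3 a c) * ρ.r c) * (ρ.r (S.star3 b c) * ρ.r c) * ρ.r x * ρ.r y
        = ρ.r (S.star3 a c) * ρ.r (S.star3 b c) * ρ.r x * ρ.r y * (ρ.r c * ρ.r c) := by
      simp [mul_comm, mul_left_comm, mul_assoc]
    rw [h2, ρ.invo, mul_one] at rel
    exact rel
  have rel4 : ρ.r (S.star3 (S.star3 a c) x) * (ρ.r (S.star3 b c) * ρ.r y) = 1 := by
    calc ρ.r (S.star3 (S.star3 a c) x) * (ρ.r (S.star3 b c) * ρ.r y)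
        = (ρ.r (S.star3 a c) * ρ.r x) * (ρ.r (S.star3 b c) * ρ.r y) := by
          rw [ρ.mul_eq hacx]
      _ = ρ.r (S.star3 a c) * ρ.r (S.star3 b c) * ρ.r x * ρ.r y := by
          simp [mul_comm, mul_left_comm, mul_assoc]
      _ = 1 := rel3
  by_cases hby : S.Collinear (S.star3 b c) y
  · rw [ρ.mul_eq hby] at rel4
    have := ρ.eq_of_mul_eq_one hf rel4
    exact hF5 (this ▸ col_star_left hby)
  · by_cases hsy : S.Collinear (S.star3 (S.star3 a c) x) y
    · have rel5 : ρ.r (S.star3 (S.star3 (S.star3 a c) x) y) * ρ.r (S.star3 b c) = 1 := by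
        calc ρ.r (S.star3 (S.star3 (S.star3 a c) x) y) * ρ.r (S.star3 b c)
            = (ρ.r (S.star3 (S.star3 a c) x) * ρ.r y) * ρ.r (S.star3 b c) := by
              rw [ρ.mul_eq hsy]
          _ = ρ.r (S.star3 (S.star3 a c) x) * (ρ.r (S.star3 b c) * ρ.r y) := by
              simp [mul_comm, mul_left_comm, mul_assoc]
          _ = 1 := rel4
      have := ρ.eq_of_mul_eq_one hf rel5
      exact (ncol_symm hF5) (this ▸ col_star_left hsy)
    · have hys : y ≠ S.star3 (S.star3 a c) x := by
        intro e
        rw [e] at rel4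
        have h0 : ρ.r (S.star3 (S.star3 a c) x) * (ρ.r (S.star3 b c) *
            ρ.r (S.star3 (S.star3 a c) x)) = ρ.r (S.star3 b c) := by
          have h1 : ρ.r (S.star3 (S.star3 a c) x) * (ρ.r (S.star3 b c) *
              ρ.r (S.star3 (S.star3 a c) x)) = (ρ.r (S.star3 (S.star3 a c) x) *
              ρ.r (S.star3 (S.star3 a c) x)) * ρ.r (S.star3 b c) := by
            simp [mul_comm, mul_left_comm, mul_assoc]
          rw [h1, ρ.invo, one_mul]
        rw [h0] at rel4
        exact ρ.ne_one _ rel4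
      have hxs : S.Collinear x (S.star3 (S.star3 a c) x) := by
        rw [star3_comm hacx]; exact col_star_left (col_symm hacx)
      have exs : S.star3 x (S.star3 (S.star3 a c) x) = S.star3 a c := by
        rw [star3_comm hacx, star3_star3 (col_symm hacx)]
      have hF6 : S.Collinear y (S.star3 a c) := by
        have := col_forced hGQ hxs (ncol_symm hnxy) (ncol_symm hsy) hxy.symm hys
          (by rw [exs]
              exact ne_of_ncol_of_col (ncol_symm hsy) (col_star_left hacx))
        rwa [exs] at this
      have rel6 : ρ.r (S.star3 x (S.star3 b c)) * ρ.r (S.star3 (S.star3 a c) y) = 1 := by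
        calc ρ.r (S.star3 x (S.star3 b c)) * ρ.r (S.star3 (S.star3 a c) y)
            = (ρ.r x * ρ.r (S.star3 b c)) * (ρ.r (S.star3 a c) * ρ.r y) := by
              rw [ρ.mul_eq hF2, ρ.mul_eq (col_symm hF6)]
          _ = ρ.r (S.star3 a c) * ρ.r (S.star3 b c) * ρ.r x * ρ.r y := by
              simp [mul_comm, mul_left_comm, mul_assoc]
          _ = 1 := rel3
      have e78 := ρ.eq_of_mul_eq_one hf rel6
      have hcol1 : S.Collinear (S.star3 a c) (S.star3 x (S.star3 b c)) := by
        rw [e78]; exact col_star_left (col_symm hF6)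
      have e9 := col_two hGQ (col_star_left hF2) hacx hcol1
      rw [star3_star3 hF2] at e9
      exact hF3ne e9
end SlimPLS

namespace SlimPLS

variable {P : Type*} {S : SlimPLS P} {t : ℕ} {R : Type*} [Group R]

/-- Case B of the quadrangle relation elimination. -/
lemma Rep.caseB (hGQ : S.IsGQ t) (ρ : S.Rep R) (hf : Function.Injective ρ.r)
    {a b x y c₁ c₂ : P}
    (hab : a ≠ b) (hnab : ¬ S.Collinear a b)
    (hax : a ≠ x) (hnax : ¬ S.Collinear a x)
    (hay : a ≠ y) (hnay : ¬ S.Collinear a y)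
    (hbx : b ≠ x) (hnbx : ¬ S.Collinear b x)
    (hby : b ≠ y) (hnby : ¬ S.Collinear b y)
    (hxy : x ≠ y) (hnxy : ¬ S.Collinear x y)
    (hc₁c₂ : c₁ ≠ c₂) (hncc : ¬ S.Collinear c₁ c₂)
    (hac₁ : S.Collinear a c₁) (hbc₁ : S.Collinear b c₁)
    (hac₂ : S.Collinear a c₂) (hbc₂ : S.Collinear b c₂)
    (hc₁x : S.Collinear c₁ x) (hc₁y : S.Collinear c₁ y)
    (hc₂x : S.Collinear c₂ x) (hc₂y : S.Collinear c₂ y)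
    (rel : ρ.r a * ρ.r b * ρ.r x * ρ.r y = 1) : False := by
  letI : CommGroup R := { (inferInstance : Group R) with mul_comm := ρ.mul_comm_all hGQ }
  have hG1 : ¬ S.Collinear a (S.star3 b c₂) := by
    have h1 := col_unique_side hGQ (col_symm hbc₂) hac₂ hab
      (ne_star_of_ncol_right (col_symm hbc₂) hnab)
    rw [star3_comm hbc₂]; exact h1.2
  have hG1ne : a ≠ S.star3 b c₂ := ne_star_of_ncol_left hbc₂ hnab
  have hG2 : ¬ S.Collinear c₁ (S.star3 b c₂) :=
    (col_unique_side hGQ hbc₂ (col_symm hbc₁) hc₁c₂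
      (ne_of_ncol_of_col hncc (col_symm (col_star_right hbc₂)))).2
  have hG2ne : c₁ ≠ S.star3 b c₂ :=
    ne_of_ncol_of_col hncc (col_symm (col_star_right hbc₂))
  have hG3 : S.Collinear (S.star3 b c₂) (S.star3 a c₁) :=
    col_forced hGQ hac₁ (ncol_symm hG1) (ncol_symm hG2) (Ne.symm hG1ne) (Ne.symm hG2ne)
      (ne_star_of_ncol_left hac₁ (ncol_symm hG1))
  have hG3' : S.Collinear (S.star3 a c₁) (S.star3 b c₂) := col_symm hG3
  have hG4 : ¬ S.Collinear x (S.star3 a c₁) := by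
    have h1 := col_unique_side hGQ (col_symm hac₁) (col_symm hc₁x) hax.symm
      (ne_star_of_ncol_right (col_symm hac₁) (ncol_symm hnax))
    rw [star3_comm hac₁]; exact h1.2
  have hG4ne : x ≠ S.star3 a c₁ := ne_star_of_ncol_left hac₁ (ncol_symm hnax)
  have hG4y : ¬ S.Collinear y (S.star3 a c₁) := by
    have h1 := col_unique_side hGQ (col_symm hac₁) (col_symm hc₁y) hay.symm
      (ne_star_of_ncol_right (col_symm hac₁) (ncol_symm hnay))
    rw [star3_comm hac₁]; exact h1.2
  have hG4yne : y ≠ S.star3 a c₁ := ne_star_of_ncol_left hac₁ (ncol_symm hnay)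
  have hG5 : ¬ S.Collinear x (S.star3 b c₂) := by
    have h1 := col_unique_side hGQ (col_symm hbc₂) (col_symm hc₂x) hbx.symm
      (ne_star_of_ncol_right (col_symm hbc₂) (ncol_symm hnbx))
    rw [star3_comm hbc₂]; exact h1.2
  have hG5ne : x ≠ S.star3 b c₂ := ne_star_of_ncol_left hbc₂ (ncol_symm hnbx)
  have hG5y : ¬ S.Collinear y (S.star3 b c₂) := by
    have h1 := col_unique_side hGQ (col_symm hbc₂) (col_symm hc₂y) hby.symm
      (ne_star_of_ncol_right (col_symm hbc₂) (ncol_symm hnby))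
    rw [star3_comm hbc₂]; exact h1.2
  have hG5yne : y ≠ S.star3 b c₂ := ne_star_of_ncol_left hbc₂ (ncol_symm hnby)
  have hG6 : S.Collinear x (S.star3 (S.star3 a c₁) (S.star3 b c₂)) :=
    col_forced hGQ hG3' hG4 hG5 hG4ne hG5ne
      (ne_of_ncol_of_col hG4 (col_symm (col_star_left hG3')))
  have hG7 : S.Collinear y (S.star3 (S.star3 a c₁) (S.star3 b c₂)) :=
    col_forced hGQ hG3' hG4y hG5y hG4yne hG5yne
      (ne_of_ncol_of_col hG4y (col_symm (col_star_left hG3')))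
  have hG8 : ¬ S.Collinear y (S.star3 x (S.star3 (S.star3 a c₁) (S.star3 b c₂))) := by
    have h1 := col_unique_side hGQ (col_symm hG6) hG7 hxy.symm
      (by rw [← star3_comm hG6]
          exact ne_of_ncol_of_col (ncol_symm hnxy) (col_symm (col_star_left hG6)))
    rw [star3_comm hG6]; exact h1.2
  have hG8ne : y ≠ S.star3 x (S.star3 (S.star3 a c₁) (S.star3 b c₂)) :=
    ne_of_ncol_of_col (ncol_symm hnxy) (col_symm (col_star_left hG6))
  have hG9 : ¬ S.Collinear c₁ (S.star3 (S.star3 a c₁) (S.star3 b c₂)) :=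
    (col_unique_side hGQ hG3' (col_star_right hac₁) hG2ne
      (ne_of_ncol_of_col hG2 (col_symm (col_star_right hG3')))).2
  have hG9ne : c₁ ≠ S.star3 (S.star3 a c₁) (S.star3 b c₂) :=
    ne_of_ncol_of_col hG2 (col_symm (col_star_right hG3'))
  have hG10 : ¬ S.Collinear c₁ (S.star3 x (S.star3 (S.star3 a c₁) (S.star3 b c₂))) :=
    (col_unique_side hGQ hG6 hc₁x hG9ne
      (ne_of_ncol_of_col hG9 (col_symm (col_star_right hG6)))).2
  have hG10ne : c₁ ≠ S.star3 x (S.star3 (S.star3 a c₁) (S.star3 b c₂)) :=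
    ne_of_ncol_of_col hG9 (col_symm (col_star_right hG6))
  have hyc₁ : S.Collinear y c₁ := col_symm hc₁y
  have hG11 : S.Collinear (S.star3 x (S.star3 (S.star3 a c₁) (S.star3 b c₂)))
      (S.star3 y c₁) :=
    col_forced hGQ hyc₁ (ncol_symm hG8) (ncol_symm hG10) (Ne.symm hG8ne) (Ne.symm hG10ne)
      (ne_of_ncol_of_col (ncol_symm hG8) (col_symm (col_star_left hyc₁)))
  have hG12 : ¬ S.Collinear c₂ (S.star3 y c₁) :=
    (col_unique_side hGQ hyc₁ hc₂y hc₁c₂.symm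
      (ne_of_ncol_of_col (ncol_symm hncc) (col_symm (col_star_right hyc₁)))).2
  -- algebra
  have rel2 : ρ.r (S.star3 (S.star3 x (S.star3 (S.star3 a c₁) (S.star3 b c₂)))
      (S.star3 y c₁)) * ρ.r c₂ = 1 := by
    calc ρ.r (S.star3 (S.star3 x (S.star3 (S.star3 a c₁) (S.star3 b c₂))) (S.star3 y c₁))
          * ρ.r c₂
        = (ρ.r (S.star3 x (S.star3 (S.star3 a c₁) (S.star3 b c₂))) * ρ.r (S.star3 y c₁))
          * ρ.r c₂ := by rw [ρ.mul_eq hG11]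
      _ = ((ρ.r x * ρ.r (S.star3 (S.star3 a c₁) (S.star3 b c₂))) * (ρ.r y * ρ.r c₁))
          * ρ.r c₂ := by rw [ρ.mul_eq hG6, ρ.mul_eq hyc₁]
      _ = ((ρ.r x * (ρ.r (S.star3 a c₁) * ρ.r (S.star3 b c₂))) * (ρ.r y * ρ.r c₁))
          * ρ.r c₂ := by rw [ρ.mul_eq hG3']
      _ = (ρ.r (S.star3 a c₁) * ρ.r c₁) * (ρ.r (S.star3 b c₂) * ρ.r c₂) * ρ.r x * ρ.r y := by
          simp [mul_comm, mul_left_comm, mul_assoc]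
      _ = ρ.r a * ρ.r b * ρ.r x * ρ.r y := by rw [← ρ.decompose hac₁, ← ρ.decompose hbc₂]
      _ = 1 := rel
  have e := ρ.eq_of_mul_eq_one hf rel2
  exact hG12 (e ▸ col_symm (col_star_right hG11))

end SlimPLS

namespace SlimPLS

variable {P : Type*} {S : SlimPLS P} {t : ℕ} {R : Type*} [Group R]

/-- No quadrangle relation among a 4-coclique. -/
lemma Rep.quadKill (hGQ : S.IsGQ t) (ρ : S.Rep R) (hf : Function.Injective ρ.r)
    {a b x y : P}
    (hab : a ≠ b) (hnab : ¬ S.Collinear a b)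
    (hax : a ≠ x) (hnax : ¬ S.Collinear a x)
    (hay : a ≠ y) (hnay : ¬ S.Collinear a y)
    (hbx : b ≠ x) (hnbx : ¬ S.Collinear b x)
    (hby : b ≠ y) (hnby : ¬ S.Collinear b y)
    (hxy : x ≠ y) (hnxy : ¬ S.Collinear x y)
    (rel : ρ.r a * ρ.r b * ρ.r x * ρ.r y = 1) : False := by
  letI : CommGroup R := { (inferInstance : Group R) with mul_comm := ρ.mul_comm_all hGQ }
  have rel' : ρ.r a * ρ.r b * ρ.r y * ρ.r x = 1 := by
    rw [← rel]; simp [mul_comm, mul_left_comm, mul_assoc]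
  obtain ⟨c₁, c₂, hcc, hac₁, hbc₁, hac₂, hbc₂, hncc⟩ := two_centers hGQ hab hnab
  by_cases h1 : S.Collinear c₁ x
  · by_cases h2 : S.Collinear c₁ y
    · by_cases h3 : S.Collinear c₂ x
      · by_cases h4 : S.Collinear c₂ y
        · exact ρ.caseB hGQ hf hab hnab hax hnax hay hnay hbx hnbx hby hnby hxy hnxy
            hcc hncc hac₁ hbc₁ hac₂ hbc₂ h1 h2 h3 h4 rel
        · exact ρ.caseA hGQ hf hab hnab hay hnay hby hnby hxy.symm (ncol_symm hnxy)
            hac₂ hbc₂ h4 rel'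
      · exact ρ.caseA hGQ hf hab hnab hax hnax hbx hnbx hxy hnxy hac₂ hbc₂ h3 rel
    · exact ρ.caseA hGQ hf hab hnab hay hnay hby hnby hxy.symm (ncol_symm hnxy)
        hac₁ hbc₁ h2 rel'
  · exact ρ.caseA hGQ hf hab hnab hax hnax hbx hnbx hxy hnxy hac₁ hbc₁ h1 rel

end SlimPLS


/-- For a faithful representation of a `(2,t)`-GQ and
non-collinear points `a, b`, the sets `A = {r_a r_x : x ≠ a, x ≁ a}` and
`B = {r_b r_x : x ≠ b, x ≁ b}` satisfy `|A ∩ B| = t + 2`. -/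
theorem gq_rep_intersection_card {P : Type*} (S : SlimPLS P) {t : ℕ}
    (hGQ : S.IsGQ t) {R : Type*} [Group R] (ρ : S.Rep R)
    (hf : Function.Injective ρ.r)
    (a b : P) (hab : a ≠ b) (hnc : ¬ S.Collinear a b) :
    ({g : R | ∃ x : P, x ≠ a ∧ ¬ S.Collinear a x ∧ g = ρ.r a * ρ.r x} ∩
      {g : R | ∃ x : P, x ≠ b ∧ ¬ S.Collinear b x ∧ g = ρ.r b * ρ.r x}).ncard
      = t + 2 := by
  classical
  letI : CommGroup R := { (inferInstance : Group R) with mul_comm := ρ.mul_comm_all hGQ }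
  have hncb : ¬ S.Collinear b a := SlimPLS.ncol_symm hnc
  -- the two relevant point sets
  set N : Set P := {x : P | S.Collinear b x ∧ ¬ S.Collinear a x} with hNdef
  set X : Set P := {x : P | x ≠ a ∧ ¬ S.Collinear a x ∧
    ∃ y, y ≠ b ∧ ¬ S.Collinear b y ∧ ρ.r a * ρ.r x = ρ.r b * ρ.r y} with hXdef
  have himg : ({g : R | ∃ x : P, x ≠ a ∧ ¬ S.Collinear a x ∧ g = ρ.r a * ρ.r x} ∩
      {g : R | ∃ x : P, x ≠ b ∧ ¬ S.Collinear b x ∧ g = ρ.r b * ρ.r x}) =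
      (fun x => ρ.r a * ρ.r x) '' X := by
    ext g
    constructor
    · rintro ⟨⟨x, hx1, hx2, rfl⟩, ⟨y, hy1, hy2, hg2⟩⟩
      exact ⟨x, ⟨hx1, hx2, y, hy1, hy2, hg2⟩, rfl⟩
    · rintro ⟨x, ⟨hx1, hx2, y, hy1, hy2, heq⟩, rfl⟩
      exact ⟨⟨x, hx1, hx2, rfl⟩, ⟨y, hy1, hy2, heq⟩⟩
  have hinj : Set.InjOn (fun x => ρ.r a * ρ.r x) X := fun u _ v _ he => hf (mul_left_cancel he)
  -- X = insert b N
  have hXN : X = insert b N := by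
    ext x
    rw [Set.mem_insert_iff]
    constructor
    · rintro ⟨hxa, hnax, y, hyb, hnby, heq⟩
      by_cases hxb : x = b
      · exact Or.inl hxb
      right
      by_cases hnbx : S.Collinear b x
      · exact ⟨hnbx, hnax⟩
      exfalso
      have hxy' : x ≠ y := by
        rintro rfl
        exact hab (hf (mul_right_cancel heq))
      by_cases hya : y = a
      · rw [hya] at heq
        have heq2 : ρ.r a * ρ.r x = ρ.r a * ρ.r b := by rw [heq]; exact mul_comm _ _
        exact hxb (hf (mul_left_cancel heq2))
      by_cases hcay : S.Collinear a y
      · have hbp : S.Collinear b (S.star3 a y) :=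
          SlimPLS.col_forced hGQ hcay hncb hnby (Ne.symm hab) (Ne.symm hyb)
            (SlimPLS.ne_star_of_ncol_left hcay hncb)
        have e1 : ρ.r x = ρ.r (S.star3 b (S.star3 a y)) := by
          rw [← ρ.mul_eq hbp, ← ρ.mul_eq hcay]
          have h3 : ρ.r b * (ρ.r a * ρ.r y) = ρ.r a * (ρ.r b * ρ.r y) := by
            simp [mul_comm, mul_left_comm]
          rw [h3, ← heq, ← mul_assoc, ρ.invo, one_mul]
        exact hnbx ((hf e1) ▸ SlimPLS.col_star_left hbp)
      by_cases hcxy : S.Collinear x y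
      · have e2 : ρ.r a * ρ.r b = ρ.r x * ρ.r y := by
          calc ρ.r a * ρ.r b = ρ.r a * (ρ.r x * ρ.r x) * ρ.r b := by
                rw [ρ.invo, mul_one]
            _ = (ρ.r a * ρ.r x) * (ρ.r x * ρ.r b) := by group
            _ = (ρ.r b * ρ.r y) * (ρ.r x * ρ.r b) := by rw [heq]
            _ = (ρ.r b * ρ.r b) * (ρ.r y * ρ.r x) := by
                simp [mul_comm, mul_left_comm, mul_assoc]
            _ = ρ.r y * ρ.r x := by rw [ρ.invo, one_mul]
            _ = ρ.r x * ρ.r y := mul_comm _ _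
        have hq : S.Collinear a (S.star3 x y) :=
          SlimPLS.col_forced hGQ hcxy hnax hcay hxa.symm (fun e => hya e.symm)
            (fun e => hnax (SlimPLS.col_symm (by rw [e]; exact SlimPLS.col_star_left hcxy)))
        have e3 : ρ.r (S.star3 a (S.star3 x y)) = ρ.r b := by
          rw [← ρ.mul_eq hq, ← ρ.mul_eq hcxy, ← e2, ← mul_assoc, ρ.invo, one_mul]
        exact hnc ((hf e3) ▸ SlimPLS.col_star_left hq)
      have rel : ρ.r a * ρ.r b * ρ.r x * ρ.r y = 1 := by
        calc ρ.r a * ρ.r b * ρ.r x * ρ.r y = (ρ.r a * ρ.r x) * (ρ.r b * ρ.r y) := by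
              simp [mul_comm, mul_left_comm, mul_assoc]
          _ = (ρ.r b * ρ.r y) * (ρ.r b * ρ.r y) := by rw [heq]
          _ = (ρ.r b * ρ.r b) * (ρ.r y * ρ.r y) := by
              simp [mul_comm, mul_left_comm, mul_assoc]
          _ = 1 := by rw [ρ.invo, ρ.invo, mul_one]
      exact ρ.quadKill hGQ hf hab hnc hxa.symm hnax (fun e => hya e.symm) hcay
        (fun e => hxb e.symm) hnbx (Ne.symm hyb) hnby hxy' hcxy rel
    · intro hx
      rcases hx with rfl | hx
      · exact ⟨Ne.symm hab, hnc, a, hab, hncb, mul_comm _ _⟩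
      · obtain ⟨hbx, hnax⟩ := hx
        have hxa : x ≠ a := SlimPLS.ne_of_col_of_ncol hbx hncb
        have hac : S.Collinear a (S.star3 b x) :=
          SlimPLS.col_forced hGQ hbx hnc hnax hab hxa.symm
            (SlimPLS.ne_star_of_ncol_left hbx hnc)
        have hbne : b ≠ S.star3 (S.star3 b x) a := by
          rw [← SlimPLS.star3_comm hac]
          exact SlimPLS.ne_star_of_ncol_left hac hncb
        have hbny : ¬ S.Collinear b (S.star3 a (S.star3 b x)) := by
          have h1 := SlimPLS.col_unique_side hGQ (SlimPLS.col_symm hac)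
            (SlimPLS.col_star_left hbx) (Ne.symm hab) hbne
          rw [SlimPLS.star3_comm hac]
          exact h1.2
        refine ⟨hxa, hnax, S.star3 a (S.star3 b x), ?_, hbny, ?_⟩
        · rw [SlimPLS.star3_comm hac]
          exact (Ne.symm hbne)
        · rw [← ρ.mul_eq hac, ← ρ.mul_eq hbx]
          have h3 : ρ.r b * (ρ.r a * (ρ.r b * ρ.r x)) =
              (ρ.r b * ρ.r b) * (ρ.r a * ρ.r x) := by
            simp [mul_comm, mul_left_comm, mul_assoc]
          rw [h3, ρ.invo, one_mul]
  -- counting N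
  have hbN : b ∉ N := fun h => h.1.1 rfl
  set f : P → Finset P := fun x => if h : S.Collinear b x then h.2.choose else ∅ with hfdef
  have fspec : ∀ x, S.Collinear b x → f x ∈ S.lines ∧ b ∈ f x ∧ x ∈ f x := by
    intro x h
    simp only [hfdef, dif_pos h]
    exact h.2.choose_spec
  have finj : Set.InjOn f N := by
    intro u hu v hv he
    by_contra huv
    obtain ⟨hl, hbl, hul⟩ := fspec u hu.1
    obtain ⟨hl', hbl', hvl'⟩ := fspec v hv.1
    rw [he] at hul
    have hbu : b ≠ u := hu.1.1
    have hbv : b ≠ v := hv.1.1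
    have hal : a ∉ f v := fun hal => hnc (SlimPLS.col_of_mem hl' hal hbl' hab)
    obtain ⟨z, ⟨hzl, hza⟩, -⟩ := hGQ.2.2.2 a (f v) hl' hal
    obtain ⟨w, hwl, hwb, hwu, htri⟩ := SlimPLS.exists_third hl' hbl' hul hbu
    have hvw : v = w := by
      rcases htri v hvl' with h | h | h
      · exact absurd h (fun e => hbv e.symm)
      · exact absurd h (fun e => huv e.symm)
      · exact h
    rcases htri z hzl with rfl | rfl | rfl
    · exact hnc hza
    · exact hu.2 hza
    · rw [← hvw] at hza
      exact hv.2 hza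
  have himg2 : f '' N = {l | l ∈ S.lines ∧ b ∈ l} := by
    apply Set.Subset.antisymm
    · rintro l ⟨x, hx, rfl⟩
      obtain ⟨h1, h2, _⟩ := fspec x hx.1
      exact ⟨h1, h2⟩
    · rintro l ⟨hl, hbl⟩
      have hal : a ∉ l := fun hal => hnc (SlimPLS.col_of_mem hl hal hbl hab)
      obtain ⟨z, ⟨hzl, hza⟩, huniq⟩ := hGQ.2.2.2 a l hl hal
      have hzb : z ≠ b := fun e => hnc (e ▸ hza)
      have hbz : S.Collinear b z := SlimPLS.col_of_mem hl hbl hzl (Ne.symm hzb)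
      have hwmem : S.star3 b z ∈ l := by
        obtain ⟨l', hl'', hb', hz', hs', _, _, _⟩ := SlimPLS.star3_spec hbz
        have : l' = l := S.unique_line l' hl'' l hl b z hbz.1 hb' hz' hbl hzl
        exact this ▸ hs'
      have hwN : S.star3 b z ∈ N := by
        refine ⟨SlimPLS.col_star_left hbz, fun hca => ?_⟩
        exact SlimPLS.star3_ne_right hbz (huniq _ ⟨hwmem, hca⟩)
      refine ⟨_, hwN, ?_⟩
      obtain ⟨h1, h2, h3⟩ := fspec _ hwN.1
      exact (S.unique_line _ h1 l hl b _ (SlimPLS.col_star_left hbz).1 h2 h3 hbl hwmem)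
  have hfinN : N.Finite :=
    Set.Finite.of_finite_image (himg2 ▸ SlimPLS.lines_through_finite hGQ b) finj
  have hNcard : N.ncard = t + 1 := by
    have h4 := Set.ncard_image_of_injOn finj
    rw [himg2, hGQ.2.2.1 b] at h4
    exact h4.symm
  rw [himg, Set.ncard_image_of_injOn hinj, hXN,
    Set.ncard_insert_of_notMem hbN hfinN, hNcard]
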